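/- arXiv:1808.05184 — 2 statements merged into one kernel-verified Lean document; each statement's English description precedes it below -/
import Mathlib

section
/- Let A be a finite-dimensional algebra and e an idempotent of A. Then Ext^i_A(A/⟨e⟩, M) = 0 for all A/⟨e⟩-modules M and all 1 ≤ i ≤ d if and only if Ext^i_A(A/⟨e⟩, I) = 0 for all injective A/⟨e⟩-modules I and all 1 ≤ i ≤ d. -/
open CategoryTheory Limits Opposite

noncomputable def homCxF {A : Type} [Ring A] (P : ChainComplex (ModuleCat A) ℕ) :
    ModuleCat A ⥤ CochainComplex (ModuleCat ℤ) ℕ where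
  obj Y := P.linearYonedaObj ℤ Y
  map {Y Z} f := {
    f := fun n => ModuleCat.ofHom (Linear.rightComp ℤ (P.X n) f)
    comm' := fun i j _ => by
      ext (g : P.X i ⟶ Y)
      show P.d j i ≫ (g ≫ f) = (P.d j i ≫ g) ≫ f
      simp }
  map_id Y := by
    ext n (g : P.X n ⟶ Y)
    show g ≫ 𝟙 Y = g
    simp
  map_comp f g := by
    ext n (u : P.X n ⟶ _)
    show u ≫ (f ≫ g) = (u ≫ f) ≫ g
    simp

instance homCxF_additive {A : Type} [Ring A] (P : ChainComplex (ModuleCat A) ℕ) :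
    (homCxF P).Additive where
  map_add {Y Z f g} := by
    ext n (u : P.X n ⟶ Y)
    show u ≫ (f + g) = u ≫ f + u ≫ g
    simp

lemma subsing_iff {X Y : ModuleCat ℤ} (e : X ≅ Y) : Subsingleton X ↔ Subsingleton Y :=
  Equiv.subsingleton_congr ((forget _).mapIso e).toEquiv

lemma homCxF_degreewise_shortExact {A : Type} [Ring A] {X : ModuleCat A}
    (P : ProjectiveResolution X) (S : ShortComplex (ModuleCat A)) (hS : S.ShortExact) (n : ℕ) :
    ((S.map (homCxF P.complex)).map (HomologicalComplex.eval _ _ n)).ShortExact := by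
  have := hS.mono_f
  have := hS.epi_g
  have h1 : Mono ((S.map (homCxF P.complex)).map (HomologicalComplex.eval _ _ n)).f := by
    rw [ModuleCat.mono_iff_injective]
    intro (g₁ : P.complex.X n ⟶ S.X₁) (g₂ : P.complex.X n ⟶ S.X₁) h
    have h' : g₁ ≫ S.f = g₂ ≫ S.f := h
    exact (cancel_mono S.f).1 h'
  have h2 : Epi ((S.map (homCxF P.complex)).map (HomologicalComplex.eval _ _ n)).g := by
    rw [ModuleCat.epi_iff_surjective]
    intro (h : P.complex.X n ⟶ S.X₃)
    exact ⟨Projective.factorThru h S.g, Projective.factorThru_comp h S.g⟩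
  refine ⟨?_⟩
  rw [ShortComplex.moduleCat_exact_iff]
  intro (x : P.complex.X n ⟶ S.X₂) (hx : x ≫ S.g = 0)
  exact ⟨hS.exact.liftFromProjective x hx, hS.exact.liftFromProjective_comp x hx⟩

lemma core {A : Type} [Ring A] {X : ModuleCat A} (P : ProjectiveResolution X)
    (S : ShortComplex (ModuleCat A)) (hS : S.ShortExact)
    (hsurj : ∀ v : X ⟶ S.X₃, ∃ w : X ⟶ S.X₂, w ≫ S.g = v)
    (j : ℕ)
    (hI : Subsingleton (((Ext ℤ (ModuleCat A) (j+1)).obj (op X)).obj S.X₂))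
    (hC : 1 ≤ j → Subsingleton (((Ext ℤ (ModuleCat A) j).obj (op X)).obj S.X₃)) :
    Subsingleton (((Ext ℤ (ModuleCat A) (j+1)).obj (op X)).obj S.X₁) := by
  have hScx : (S.map (homCxF P.complex)).ShortExact :=
    HomologicalComplex.shortExact_of_degreewise_shortExact _
      (homCxF_degreewise_shortExact P S hS)
  set Scx := S.map (homCxF P.complex) with hScxdef
  have hI' : Subsingleton ((Scx.X₂).homology (j+1)) :=
    (subsing_iff (P.isoExt (j+1) S.X₂)).1 hI
  rw [subsing_iff (P.isoExt (j+1) S.X₁)]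
  show Subsingleton ((Scx.X₁).homology (j+1))
  have hz : ∀ x : (Scx.X₁).homology (j+1), x = 0 := by
    intro x
    have hfx : HomologicalComplex.homologyMap Scx.f (j+1) x = 0 := Subsingleton.elim _ _
    have hex := hScx.homology_exact₁ j (j+1) (by simp)
    rw [ShortComplex.moduleCat_exact_iff] at hex
    obtain ⟨y, hy⟩ := hex x hfx
    rcases Nat.eq_zero_or_pos j with hj | hj
    · subst hj
      -- represent y by a cocycle
      have hπs : Function.Surjective (Scx.X₃.homologyπ 0) := by
        rw [← ModuleCat.epi_iff_surjective]; infer_instance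
      obtain ⟨z, hzy⟩ := hπs y
      set u : P.complex.X 0 ⟶ S.X₃ := Scx.X₃.iCycles 0 z with hu
      have hud : (forget₂ (ModuleCat ℤ) Ab).map (Scx.X₃.d 0 1) u = 0 := by
        show (Scx.X₃.iCycles 0 ≫ Scx.X₃.d 0 1) z = 0
        rw [HomologicalComplex.iCycles_d]
        rfl
      have hud' : P.complex.d 1 0 ≫ u = 0 := hud
      obtain ⟨v, hv⟩ := CokernelCofork.IsColimit.desc' P.isColimitCokernelCofork u hud'
      obtain ⟨w, hw⟩ := hsurj v
      set x₂ : P.complex.X 0 ⟶ S.X₂ := P.π.f 0 ≫ w with hx₂def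
      have hgx₂ : (forget₂ (ModuleCat ℤ) Ab).map (Scx.g.f 0) x₂ = u := by
        show (P.π.f 0 ≫ w) ≫ S.g = u
        exact (Category.assoc (P.π.f 0) w S.g).trans ((congrArg (fun t => P.π.f 0 ≫ t) hw).trans hv)
      have hdx₂ : (forget₂ (ModuleCat ℤ) Ab).map (Scx.X₂.d 0 1) x₂ = 0 := by
        show P.complex.d 1 0 ≫ P.π.f 0 ≫ w = 0
        exact (Category.assoc (P.complex.d 1 0) (P.π.f 0) w).symm.trans
          ((congrArg (fun t => t ≫ w) P.complex_d_comp_π_f_zero).trans zero_comp)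
      have hx₁ : (forget₂ (ModuleCat ℤ) Ab).map (Scx.f.f 1)
          (0 : (forget₂ (ModuleCat ℤ) Ab).obj (Scx.X₁.X 1)) =
          (forget₂ (ModuleCat ℤ) Ab).map (Scx.X₂.d 0 1) x₂ := by
        rw [map_zero, hdx₂]
      have hδ := hScx.δ_apply 0 1 (by simp) u hud x₂ hgx₂ 0 hx₁ 2 (by simp)
      -- identify y with the class of the cocycle u
      have hzmk : z = Scx.X₃.cyclesMk u 1 (by simp) hud := by
        apply (ModuleCat.mono_iff_injective (Scx.X₃.iCycles 0)).1 inferInstance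
        exact (HomologicalComplex.i_cyclesMk Scx.X₃ u 1 (by simp) hud).symm
      -- the class of 0 is 0
      have hmk0 : ∀ (h : (forget₂ (ModuleCat ℤ) Ab).map (Scx.X₁.d 1 2)
            (0 : (forget₂ (ModuleCat ℤ) Ab).obj (Scx.X₁.X 1)) = 0),
          Scx.X₁.cyclesMk 0 2 (by simp) h = 0 := by
        intro h
        apply (ModuleCat.mono_iff_injective (Scx.X₁.iCycles 1)).1 inferInstance
        rw [map_zero]
        exact HomologicalComplex.i_cyclesMk Scx.X₁ 0 2 (by simp) h
      rw [← hy, ← hzy, hzmk]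
      calc (hScx.δ 0 1 (by simp)) ((Scx.X₃.homologyπ 0) (Scx.X₃.cyclesMk u 1 (by simp) hud))
          = (Scx.X₁.homologyπ 1) (Scx.X₁.cyclesMk 0 2 (by simp) _) := hδ
        _ = (Scx.X₁.homologyπ 1) 0 := by rw [hmk0]
        _ = 0 := map_zero _
    · have hsub : Subsingleton ((Scx.X₃).homology j) :=
        (subsing_iff (P.isoExt j S.X₃)).1 (hC hj)
      have hy0 : y = 0 := Subsingleton.elim _ _
      rw [hy0, map_zero] at hy
      exact hy.symm
  exact ⟨fun a b => by rw [hz a, hz b]⟩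

lemma restrictScalars_shortExact {A B : Type} [Ring A] [Ring B] (π : A →+* B)
    (S : ShortComplex (ModuleCat B)) (hS : S.ShortExact) :
    (S.map (ModuleCat.restrictScalars π)).ShortExact := by
  have hi := hS.moduleCat_injective_f
  have hs := hS.moduleCat_surjective_g
  have he := (ShortComplex.moduleCat_exact_iff S).1 hS.exact
  have h1 : Mono (S.map (ModuleCat.restrictScalars π)).f := by
    rw [ModuleCat.mono_iff_injective]; exact hi
  have h2 : Epi (S.map (ModuleCat.restrictScalars π)).g := by
    rw [ModuleCat.epi_iff_surjective]; exact hs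
  refine ⟨?_⟩
  rw [ShortComplex.moduleCat_exact_iff]
  exact he

/-- `extGrp A i X Y` is the `i`-th Ext group `Ext^i_A(X, Y)` in the category of
`A`-modules. -/
noncomputable abbrev extGrp (A : Type) [Ring A] (i : ℕ) (X Y : ModuleCat A) : Type :=
  ((Ext ℤ (ModuleCat A) i).obj (Opposite.op X)).obj Y

/-- Let `A` be a finite-dimensional algebra and `e` an idempotent of `A`,
with quotient ring `B = A/⟨e⟩` (presented by a surjective ring homomorphism `π` with
kernel `⟨e⟩`).  Then `Ext^i_A(A/⟨e⟩, M) = 0` for all `A/⟨e⟩`-modules `M` and all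
`1 ≤ i ≤ d` if and only if `Ext^i_A(A/⟨e⟩, I) = 0` for all injective `A/⟨e⟩`-modules `I`
and all `1 ≤ i ≤ d`. -/
theorem stmt3
    (k : Type) [Field k] (A : Type) [Ring A] [Algebra k A] [FiniteDimensional k A]
    (e : A) (he : IsIdempotentElem e) (d : ℕ) (hd : 1 ≤ d)
    (B : Type) [Ring B] (π : A →+* B) (hπ : Function.Surjective π)
    (hker : ∀ a : A, π a = 0 ↔ a ∈ TwoSidedIdeal.span {e}) :
    (∀ (M : ModuleCat B) (i : ℕ), 1 ≤ i → i ≤ d →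
        Subsingleton (extGrp A i
          ((ModuleCat.restrictScalars π).obj (ModuleCat.of B B))
          ((ModuleCat.restrictScalars π).obj M))) ↔
      (∀ (I : ModuleCat B), Module.Injective B I → ∀ (i : ℕ), 1 ≤ i → i ≤ d →
        Subsingleton (extGrp A i
          ((ModuleCat.restrictScalars π).obj (ModuleCat.of B B))
          ((ModuleCat.restrictScalars π).obj I))) := by
  constructor
  · intro h I _ i h1 h2
    exact h I i h1 h2
  · intro h
    set X : ModuleCat A := (ModuleCat.restrictScalars π).obj (ModuleCat.of B B) with hX
    suffices H : ∀ i : ℕ, ∀ M : ModuleCat B, 1 ≤ i → i ≤ d →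
        Subsingleton (extGrp A i X ((ModuleCat.restrictScalars π).obj M)) by
      intro M i h1 h2
      exact H i M h1 h2
    intro i
    induction i using Nat.strong_induction_on with
    | _ i IH =>
      intro M h1 h2
      obtain ⟨j, rfl⟩ : ∃ j, i = j + 1 := ⟨i - 1, (Nat.succ_pred_eq_of_pos h1).symm⟩
      -- the short exact sequence 0 → M → J → C0 → 0 in ModuleCat B
      set J : ModuleCat B := Injective.under M with hJ
      set C0 : ModuleCat B := Limits.cokernel (Injective.ι M) with hC0
      set SB : ShortComplex (ModuleCat B) :=
        ShortComplex.mk (Injective.ι M) (Limits.cokernel.π (Injective.ι M))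
          (Limits.cokernel.condition _) with hSB
      have hSBse : SB.ShortExact :=
        ⟨ShortComplex.exact_of_g_is_cokernel _ (Limits.cokernelIsCokernel _)⟩
      set SA := SB.map (ModuleCat.restrictScalars π) with hSA
      have hSAse : SA.ShortExact := restrictScalars_shortExact π SB hSBse
      -- a projective resolution of X
      obtain ⟨P⟩ : Nonempty (ProjectiveResolution X) := HasProjectiveResolution.out
      -- the key surjectivity property
      have hsurj : ∀ v : X ⟶ SA.X₃, ∃ w : X ⟶ SA.X₂, w ≫ SA.g = v := by
        intro v
        have hcoksurj : Function.Surjective (Limits.cokernel.π (Injective.ι M)) := by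
          rw [← ModuleCat.epi_iff_surjective]; infer_instance
        set c : (C0 : Type) := v (1 : B) with hc
        obtain ⟨y, hy⟩ := hcoksurj c
        refine ⟨(ModuleCat.restrictScalars π).map
          (ModuleCat.ofHom (LinearMap.toSpanSingleton B J y)), ?_⟩
        apply ModuleCat.hom_ext
        apply LinearMap.ext
        intro (x : B)
        obtain ⟨a, rfl⟩ := hπ x
        show (Limits.cokernel.π (Injective.ι M)) ((π a) • y) = v (π a)
        have h2 : v ((π a) • (1 : B)) = (π a) • c := by
          rw [hc]
          exact v.hom.map_smul a (1 : B)
        rw [map_smul, hy, ← h2, smul_eq_mul, mul_one]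
      -- hypotheses of the core lemma
      have hJinj : Module.Injective B J := by
        rw [Module.injective_iff_injective_object]
        exact (inferInstance : Injective J)
      have hI : Subsingleton (((Ext ℤ (ModuleCat A) (j+1)).obj (Opposite.op X)).obj SA.X₂) :=
        h J hJinj (j+1) h1 h2
      have hC : 1 ≤ j →
          Subsingleton (((Ext ℤ (ModuleCat A) j).obj (Opposite.op X)).obj SA.X₃) := by
        intro hj
        exact IH j (Nat.lt_succ_self j) C0 hj (le_trans (Nat.le_succ j) h2)
      exact core P SA hSAse hsurj j hI hC
end

section
/- Let A be a finite-dimensional algebra over a field k with gl.dim(A) ≤ d, and let M, N be finitely generated A-modules. Then there is an isomorphism Hom_A(M, τ_d(N)) ≅ D Ext^d_A(N, M), where D = Hom_k(−, k) and τ_d = τ ∘ Ω^{d-1} is the d-Auslander–Reiten translation, provided N has no projective direct summands. -/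
/-- `ExactSeq A n S f` says that `0 → S 0 → S 1 → ⋯ → S (n+1) → 0` is an exact
sequence of `A`-modules. -/
def ExactSeq (A : Type) [Ring A] (n : ℕ) (S : Fin (n + 2) → ModuleCat A)
    (f : ∀ i : Fin (n + 1), S i.castSucc ⟶ S i.succ) : Prop :=
  Function.Injective (f 0) ∧ Function.Surjective (f (Fin.last n)) ∧
    ∀ i : Fin n, Function.Exact (f i.castSucc) (f i.succ)

/-- The kernel of `f` is a superfluous (small) submodule of its domain; this expresses
minimality (projective-cover property) of a step in a projective resolution. -/
def SmallKernel (A : Type) [Ring A] (X Y : Type) [AddCommGroup X] [Module A X]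
    [AddCommGroup Y] [Module A Y] (f : X →ₗ[A] Y) : Prop :=
  ∀ L : Submodule A X, L ⊔ LinearMap.ker f = ⊤ → L = ⊤

theorem aux_dual_basis (A : Type) [Ring A] (P : Type) [AddCommGroup P] [Module A P]
    [Module.Projective A P] [Module.Finite A P] :
    ∃ (n : ℕ) (e : Fin n → P) (g : Fin n → (P →ₗ[A] A)),
      ∀ p : P, ∑ i, g i p • e i = p := by
  obtain ⟨n, π, hπ⟩ := Module.Finite.exists_fin' A P
  obtain ⟨s, hs⟩ := Module.projective_lifting_property π LinearMap.id hπ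
  refine ⟨n, fun i => π (Pi.single i 1), fun i => (LinearMap.proj i).comp s, fun p => ?_⟩
  have h1 : ∀ a : Fin n → A, π a = ∑ i, a i • π (Pi.single i 1) := by
    intro a
    have ha : a = ∑ i, a i • (Pi.single i 1 : Fin n → A) := by
      funext j
      simp [Finset.sum_apply, Pi.single_apply, mul_ite]
    conv_lhs => rw [ha]
    rw [map_sum]
    simp
  have h2 : π (s p) = p := by
    have := congrArg (fun φ : P →ₗ[A] P => φ p) hs
    simpa using this
  simpa [h1 (s p)] using h2

theorem aux_finite_of_small {A X Y : Type} [Ring A] [AddCommGroup X] [Module A X]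
    [AddCommGroup Y] [Module A Y] (f : X →ₗ[A] Y)
    (hf : SmallKernel A X Y f) (hr : (LinearMap.range f).FG) :
    Module.Finite A X := by
  classical
  obtain ⟨s, hs⟩ := hr
  have hsub : ∀ y : {y // y ∈ s}, ∃ x, f x = (y : Y) := by
    rintro ⟨y, hy⟩
    have : y ∈ LinearMap.range f := by
      rw [← hs]; exact Submodule.subset_span hy
    exact this
  choose t ht using hsub
  set L : Submodule A X := Submodule.span A (Set.range t) with hL
  have hmap : Submodule.map f L = LinearMap.range f := by
    rw [hL, Submodule.map_span, ← hs]
    congr 1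
    ext y
    constructor
    · rintro ⟨x, ⟨⟨z, hz⟩, rfl⟩, rfl⟩
      simpa [ht] using hz
    · intro hy
      exact ⟨t ⟨y, hy⟩, ⟨⟨y, hy⟩, rfl⟩, ht _⟩
  have htop : L ⊔ LinearMap.ker f = ⊤ := by
    rw [eq_top_iff]
    intro x _
    have hx : f x ∈ Submodule.map f L := by rw [hmap]; exact ⟨x, rfl⟩
    obtain ⟨l, hl, hlx⟩ := hx
    refine Submodule.mem_sup.mpr ⟨l, hl, x - l, ?_, by abel⟩
    simp [LinearMap.mem_ker, map_sub, hlx]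
  have := hf L htop
  rw [Module.finite_def, ← this, hL]
  exact Submodule.fg_span (Set.finite_range t)

/-- **higher Auslander–Reiten duality of Iyama.** Let `A` be a
finite-dimensional algebra over a field `k` with `gl.dim(A) ≤ d` and let `M, N` be
finitely generated `A`-modules, with `N` having no nonzero projective direct summands.
Then `Hom_A(M, τ_d N) ≅ D Ext^d_A(N, M)` where `D = Hom_k(−, k)` and
`τ_d = τ ∘ Ω^{d-1}` is the `d`-Auslander–Reiten translation.  Here a minimal projective
resolution `0 → P_d → ⋯ → P_0 → N → 0` is given as `S` (with `S 0 = P_d`), the module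
`τ_d N = τ(Ω^{d-1} N) = D Tr(Ω^{d-1} N)` is presented by the perfect pairing `β`
identifying `τ` with the `k`-dual of `Tr(Ω^{d-1}N) = coker(Hom_A(P_{d-1}, A) →
Hom_A(P_d, A))` (the `A`-action corresponding to the right `A`-action on
`Hom_A(P_d, A)`), and `Ext^d_A(N, M)` is computed from the resolution as
`coker(Hom_A(P_{d-1}, M) → Hom_A(P_d, M))`. -/
theorem stmt10
    (k : Type) [Field k] (A : Type) [Ring A] [Algebra k A] [FiniteDimensional k A]
    [SMulCommClass A k A]
    (d : ℕ) (hd : 0 < d)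
    (hgl : ∀ i : ℕ, d < i → ∀ X Y : ModuleCat A, Subsingleton (extGrp A i X Y))
    (M : Type) [AddCommGroup M] [Module A M] [Module k M] [IsScalarTower k A M]
    [SMulCommClass A k M] [Module.Finite A M]
    (N : Type) [AddCommGroup N] [Module A N] [Module.Finite A N]
    -- `N` has no nonzero projective direct summands
    (hN : ∀ P Q : Submodule A N, IsCompl P Q → Module.Projective A P → P = ⊥)
    -- a minimal projective resolution `0 → P_d → ⋯ → P_0 → N → 0` (`S 0 = P_d`)
    (S : Fin (d + 2) → ModuleCat A)
    (f : ∀ i : Fin (d + 1), S i.castSucc ⟶ S i.succ)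
    (hlast : S (Fin.last (d + 1)) = ModuleCat.of A N)
    (hproj : ∀ i : Fin (d + 1), Module.Projective A (S i.castSucc))
    (hex : ExactSeq A d S f)
    (hmin : ∀ i : Fin (d + 1), SmallKernel A _ _ (f i).hom)
    -- `τ = τ_d N = D Tr Ω^{d-1} N`, presented by the pairing `β`
    (τ : Type) [AddCommGroup τ] [Module A τ] [Module k τ] [IsScalarTower k A τ]
    [SMulCommClass A k τ]
    (β : τ →ₗ[k] (((S 0 : Type) →ₗ[A] A) →ₗ[k] k))
    (hβrel : ∀ (x : τ) (h : (S 1 : Type) →ₗ[A] A), β x (h.comp (f 0).hom) = 0)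
    (hβinj : Function.Injective β)
    (hβsurj : ∀ φ : ((S 0 : Type) →ₗ[A] A) →ₗ[k] k,
      (∀ h : (S 1 : Type) →ₗ[A] A, φ (h.comp (f 0).hom) = 0) → ∃ x : τ, β x = φ)
    (hβmod : ∀ (a : A) (x : τ) (g : (S 0 : Type) →ₗ[A] A),
      β (a • x) g = β x (MulOpposite.op a • g)) :
    Nonempty ((M →ₗ[A] τ) ≃ₗ[k]
      Module.Dual k
        (((S 0 : Type) →ₗ[A] M) ⧸
          Submodule.span k
            (Set.range fun h : (S 1 : Type) →ₗ[A] M => h.comp (f 0).hom))) := by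
  
  classical
  -- A is a noetherian ring
  haveI hNoeth : IsNoetherianRing A :=
    isNoetherianRing_iff.mpr (isNoetherian_of_tower k inferInstance)
  -- all terms of the resolution are finitely generated
  have hfin : ∀ t : ℕ, ∀ i : Fin (d + 2), (i : ℕ) + t = d + 1 → Module.Finite A (S i) := by
    intro t
    induction t with
    | zero =>
      intro i hi
      have hi' : i = Fin.last (d + 1) := Fin.ext (by simpa using hi)
      rw [hi', hlast]
      exact (inferInstance : Module.Finite A N)
    | succ t ih =>
      intro i hi
      have hival : (i : ℕ) < d + 1 := by omega
      set j : Fin (d + 1) := ⟨(i : ℕ), hival⟩ with hj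
      haveI : Module.Finite A (S j.succ) := by
        refine ih j.succ ?_
        simp only [Fin.val_succ, hj]
        omega
      have hrange : (LinearMap.range (f j).hom).FG := IsNoetherian.noetherian _
      have hfinc := aux_finite_of_small (f j).hom (hmin j) hrange
      have hji : j.castSucc = i := Fin.ext rfl
      rwa [hji] at hfinc
  haveI hP0fin : Module.Finite A (S (0 : Fin (d + 2))) := hfin (d + 1) 0 (by simp)
  haveI hP1fin : Module.Finite A (S (1 : Fin (d + 2))) := by
    refine hfin d 1 ?_
    simp
    omega
  haveI hP0proj : Module.Projective A (S (0 : Fin (d + 2))) := hproj 0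
  haveI hP1proj : Module.Projective A (S (1 : Fin (d + 2))) := by
    have e1 : ((1 : Fin (d + 1)).castSucc) = (1 : Fin (d + 2)) := by
      ext
      simp [Fin.val_one, Nat.mod_eq_of_lt, hd]
    rw [← e1]
    exact hproj 1
  obtain ⟨n, e, g, hdual⟩ := aux_dual_basis A (S (0 : Fin (d + 2)))
  obtain ⟨n', e', g', hdual'⟩ := aux_dual_basis A (S (1 : Fin (d + 2)))
  -- `u` is automatically `k`-linear
  have hc : ∀ (c : k) (m : M) (u : M →ₗ[A] τ), u (c • m) = c • u m := by
    intro c m u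
    rw [← algebraMap_smul A c m, map_smul, algebraMap_smul]
  -- the "multiplication" map `sm m gg : p ↦ gg p • m`
  let sm : M → ((S (0 : Fin (d + 2)) : Type) →ₗ[A] A) →
      ((S (0 : Fin (d + 2)) : Type) →ₗ[A] M) := fun m gg =>
    { toFun := fun p => gg p • m
      map_add' := fun p q => by
        show gg (p + q) • m = gg p • m + gg q • m
        rw [map_add, add_smul]
      map_smul' := fun a p => by
        show gg (a • p) • m = (RingHom.id A) a • (gg p • m)
        rw [map_smul, smul_eq_mul, RingHom.id_apply, mul_smul] }
  have sm_apply : ∀ (m : M) (gg) (p), sm m gg p = gg p • m := fun _ _ _ => rfl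
  let sm' : M → ((S (1 : Fin (d + 2)) : Type) →ₗ[A] A) →
      ((S (1 : Fin (d + 2)) : Type) →ₗ[A] M) := fun m hh =>
    { toFun := fun q => hh q • m
      map_add' := fun p q => by
        show hh (p + q) • m = hh p • m + hh q • m
        rw [map_add, add_smul]
      map_smul' := fun a p => by
        show hh (a • p) • m = (RingHom.id A) a • (hh p • m)
        rw [map_smul, smul_eq_mul, RingHom.id_apply, mul_smul] }
  -- key identity about the dual basis
  have key1 : ∀ (x : τ) (gg : (S (0 : Fin (d + 2)) : Type) →ₗ[A] A),
      (∑ i, β x (MulOpposite.op (gg (e i)) • g i)) = β x gg := by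
    intro x gg
    rw [← map_sum]
    congr 1
    ext p
    rw [LinearMap.sum_apply]
    have hterm : ∀ i, (MulOpposite.op (gg (e i)) • g i) p = g i p * gg (e i) := by
      intro i
      rw [LinearMap.smul_apply, MulOpposite.smul_eq_mul_unop, MulOpposite.unop_op]
    calc (∑ i, (MulOpposite.op (gg (e i)) • g i) p)
        = ∑ i, gg (g i p • e i) := by
          refine Finset.sum_congr rfl fun i _ => ?_
          rw [hterm i, map_smul, smul_eq_mul]
      _ = gg (∑ i, g i p • e i) := (map_sum gg _ _).symm
      _ = gg p := by rw [hdual p]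
  -- the pairing
  let Φ₀ : (M →ₗ[A] τ) → (((S (0 : Fin (d + 2)) : Type) →ₗ[A] M) →ₗ[k] k) := fun u =>
    { toFun := fun h => ∑ i, β (u (h (e i))) (g i)
      map_add' := fun h h' => by
        simp only [LinearMap.add_apply, map_add]
        rw [← Finset.sum_add_distrib]
      map_smul' := fun c h => by
        simp only [LinearMap.smul_apply, RingHom.id_apply]
        rw [Finset.smul_sum]
        refine Finset.sum_congr rfl fun i _ => ?_
        rw [hc c _ u, map_smul, LinearMap.smul_apply] }
  have Φ₀_apply : ∀ (u : M →ₗ[A] τ) (h), Φ₀ u h = ∑ i, β (u (h (e i))) (g i) :=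
    fun _ _ => rfl
  -- `Φ₀ u` on `sm m gg` recovers `β (u m) gg`
  have key2 : ∀ (u : M →ₗ[A] τ) (m : M) (gg), Φ₀ u (sm m gg) = β (u m) gg := by
    intro u m gg
    rw [Φ₀_apply]
    calc (∑ i, β (u (sm m gg (e i))) (g i))
        = ∑ i, β (u m) (MulOpposite.op (gg (e i)) • g i) := by
          refine Finset.sum_congr rfl fun i _ => ?_
          rw [sm_apply, map_smul, hβmod]
      _ = β (u m) gg := key1 _ _
  -- `Φ₀ u` vanishes on the relations
  have hvan : ∀ (u : M →ₗ[A] τ) (h1 : (S (1 : Fin (d + 2)) : Type) →ₗ[A] M),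
      Φ₀ u (h1.comp (f 0).hom) = 0 := by
    intro u h1
    have expand : ∀ i, β (u (h1 ((f 0).hom (e i)))) (g i)
        = ∑ j, β (u (h1 (e' j))) (MulOpposite.op (g' j ((f 0).hom (e i))) • g i) := by
      intro i
      have hq : h1 ((f 0).hom (e i)) = ∑ j, g' j ((f 0).hom (e i)) • h1 (e' j) := by
        conv_lhs => rw [← hdual' ((f 0).hom (e i))]
        rw [map_sum]
        exact Finset.sum_congr rfl fun j _ => by rw [map_smul]
      rw [hq, map_sum u]
      have : ∀ j, u (g' j ((f 0).hom (e i)) • h1 (e' j)) = g' j ((f 0).hom (e i)) • u (h1 (e' j)) :=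
        fun j => map_smul u _ _
      rw [Finset.sum_congr rfl fun j _ => this j, map_sum β, LinearMap.sum_apply]
      exact Finset.sum_congr rfl fun j _ => hβmod _ _ _
    rw [Φ₀_apply]
    calc (∑ i, β (u ((h1.comp (f 0).hom) (e i))) (g i))
        = ∑ i, ∑ j, β (u (h1 (e' j))) (MulOpposite.op (g' j ((f 0).hom (e i))) • g i) :=
          Finset.sum_congr rfl fun i _ => expand i
      _ = ∑ j, ∑ i, β (u (h1 (e' j)))
            (MulOpposite.op (((g' j).comp (f 0).hom) (e i)) • g i) := Finset.sum_comm
      _ = ∑ j, β (u (h1 (e' j))) ((g' j).comp (f 0).hom) :=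
          Finset.sum_congr rfl fun j _ => key1 _ _
      _ = 0 := Finset.sum_eq_zero fun j _ => hβrel _ _
  -- the quotient and the linear map Φ
  set V : Submodule k ((S (0 : Fin (d + 2)) : Type) →ₗ[A] M) :=
    Submodule.span k
      (Set.range fun h : (S (1 : Fin (d + 2)) : Type) →ₗ[A] M => h.comp (f 0).hom) with hVdef
  have hVle : ∀ u : M →ₗ[A] τ, V ≤ LinearMap.ker (Φ₀ u) := by
    intro u
    rw [hVdef, Submodule.span_le]
    rintro x ⟨h1, rfl⟩
    simp only [SetLike.mem_coe, LinearMap.mem_ker]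
    exact hvan u h1
  let Φ : (M →ₗ[A] τ) →ₗ[k]
      Module.Dual k (((S (0 : Fin (d + 2)) : Type) →ₗ[A] M) ⧸ V) :=
    { toFun := fun u => V.liftQ (Φ₀ u) (hVle u)
      map_add' := fun u u' => by
        refine Submodule.linearMap_qext _ ?_
        ext hh
        simp only [LinearMap.comp_apply, Submodule.mkQ_apply, Submodule.liftQ_apply,
          LinearMap.add_apply, Submodule.liftQ_apply]
        rw [Φ₀_apply, Φ₀_apply, Φ₀_apply, ← Finset.sum_add_distrib]
        refine Finset.sum_congr rfl fun i _ => ?_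
        rw [LinearMap.add_apply, map_add, LinearMap.add_apply]
      map_smul' := fun c u => by
        refine Submodule.linearMap_qext _ ?_
        ext hh
        simp only [LinearMap.comp_apply, Submodule.mkQ_apply, Submodule.liftQ_apply,
          RingHom.id_apply, LinearMap.smul_apply, Submodule.liftQ_apply]
        rw [Φ₀_apply, Φ₀_apply, Finset.smul_sum]
        refine Finset.sum_congr rfl fun i _ => ?_
        rw [LinearMap.smul_apply, map_smul, LinearMap.smul_apply] }
  have Φ_apply : ∀ (u : M →ₗ[A] τ) (hh),
      Φ u (Submodule.Quotient.mk hh) = Φ₀ u hh := fun _ _ => rfl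
  -- injectivity
  have hinj : Function.Injective Φ := by
    intro u u' huu
    have hB : ∀ hh, Φ₀ u hh = Φ₀ u' hh := by
      intro hh
      have := congrArg (fun ψ => ψ (Submodule.Quotient.mk hh)) huu
      simpa only [Φ_apply] using this
    refine LinearMap.ext fun m => hβinj ?_
    refine LinearMap.ext fun gg => ?_
    rw [← key2 u m gg, ← key2 u' m gg]
    exact hB (sm m gg)
  -- surjectivity
  have hsurj : Function.Surjective Φ := by
    intro ψ
    set φ : ((S (0 : Fin (d + 2)) : Type) →ₗ[A] M) →ₗ[k] k := ψ ∘ₗ V.mkQ with hφdef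
    have hφapp : ∀ hh, φ hh = ψ (Submodule.Quotient.mk hh) := fun _ => rfl
    have hφV : ∀ x ∈ V, φ x = 0 := by
      intro x hx
      rw [hφapp, (Submodule.Quotient.mk_eq_zero V).mpr hx, map_zero]
    have hsm_add : ∀ (m : M) (gg gg'), sm m (gg + gg') = sm m gg + sm m gg' := by
      intro m gg gg'
      refine LinearMap.ext fun p => ?_
      rw [LinearMap.add_apply, sm_apply, sm_apply, sm_apply, LinearMap.add_apply, add_smul]
    have hsm_smul : ∀ (m : M) (c : k) (gg), sm m (c • gg) = c • sm m gg := by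
      intro m c gg
      refine LinearMap.ext fun p => ?_
      rw [LinearMap.smul_apply, sm_apply, sm_apply, LinearMap.smul_apply,
        Algebra.smul_def, mul_smul, algebraMap_smul]
    let χ : M → (((S (0 : Fin (d + 2)) : Type) →ₗ[A] A) →ₗ[k] k) := fun m =>
      { toFun := fun gg => φ (sm m gg)
        map_add' := fun gg gg' => by
          show φ (sm m (gg + gg')) = φ (sm m gg) + φ (sm m gg')
          rw [hsm_add, map_add]
        map_smul' := fun c gg => by
          show φ (sm m (c • gg)) = (RingHom.id k) c • φ (sm m gg)
          rw [hsm_smul, map_smul, RingHom.id_apply] }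
    have hχ_apply : ∀ m gg, χ m gg = φ (sm m gg) := fun _ _ => rfl
    have hχ : ∀ m, ∃ x : τ, β x = χ m := by
      intro m
      refine hβsurj (χ m) fun hh => ?_
      rw [hχ_apply]
      have hcomp : sm m (hh.comp (f 0).hom) = (sm' m hh).comp (f 0).hom :=
        LinearMap.ext fun p => rfl
      rw [hcomp]
      refine hφV _ ?_
      rw [hVdef]
      exact Submodule.subset_span ⟨sm' m hh, rfl⟩
    choose uf huf using hχ
    have hufadd : ∀ m m', uf (m + m') = uf m + uf m' := by
      intro m m'
      refine hβinj ?_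
      rw [huf, map_add, huf, huf]
      refine LinearMap.ext fun gg => ?_
      rw [LinearMap.add_apply, hχ_apply, hχ_apply, hχ_apply, ← map_add]
      congr 1
      refine LinearMap.ext fun p => ?_
      rw [LinearMap.add_apply, sm_apply, sm_apply, sm_apply, smul_add]
    have hufsmul : ∀ (a : A) (m : M), uf (a • m) = a • uf m := by
      intro a m
      refine hβinj ?_
      refine LinearMap.ext fun gg => ?_
      rw [huf, hχ_apply, hβmod, huf, hχ_apply]
      congr 1
      refine LinearMap.ext fun p => ?_
      rw [sm_apply, sm_apply, LinearMap.smul_apply, MulOpposite.smul_eq_mul_unop,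
        MulOpposite.unop_op, smul_smul]
    let u : M →ₗ[A] τ :=
      { toFun := uf
        map_add' := hufadd
        map_smul' := fun a m => by rw [RingHom.id_apply]; exact hufsmul a m }
    refine ⟨u, ?_⟩
    refine Submodule.linearMap_qext _ ?_
    refine LinearMap.ext fun hh => ?_
    rw [LinearMap.comp_apply, LinearMap.comp_apply, Submodule.mkQ_apply, Φ_apply,
      ← hφapp hh, Φ₀_apply]
    have hstep : ∀ i, β (u (hh (e i))) (g i) = φ (sm (hh (e i)) (g i)) := by
      intro i
      show β (uf (hh (e i))) (g i) = φ (sm (hh (e i)) (g i))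
      rw [huf, hχ_apply]
    rw [Finset.sum_congr rfl fun i _ => hstep i, ← map_sum]
    congr 1
    refine LinearMap.ext fun p => ?_
    rw [LinearMap.sum_apply]
    calc (∑ i, sm (hh (e i)) (g i) p)
        = ∑ i, hh (g i p • e i) := by
          refine Finset.sum_congr rfl fun i _ => ?_
          rw [sm_apply, map_smul]
      _ = hh (∑ i, g i p • e i) := (map_sum hh _ _).symm
      _ = hh p := by rw [hdual p]
  exact ⟨LinearEquiv.ofBijective Φ ⟨hinj, hsurj⟩⟩
end
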